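/- arXiv:1905.00166 — 2 statements merged into one kernel-verified Lean document; each statement's English description precedes it below -/
import Mathlib

section
/- Let n be a positive integer, α₁ ∈ ℝ with α₁ ∉ {0, −1}, and α₂ ∈ ℝ with α₂ ∉ {0, α₁}. Then for every pair of indices 1 ≤ i < j ≤ n, the matrix (e_i + α₂ e_j)(e_i + α₂ e_j)ᵀ does not belong to cone(B̄(α₁)). -/
open Matrix Finset

noncomputable section

/-- `e i` is the standard basis vector with a `1` in coordinate `i`. -/
def e {n : ℕ} (i : Fin n) : Fin n → ℝ := Pi.single i 1

/-- The positive semidefinite cone `S^n_+`. -/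
def PSDcone (n : ℕ) : Set (Matrix (Fin n) (Fin n) ℝ) :=
  {X | X.IsSymm ∧ ∀ d : Fin n → ℝ, 0 ≤ d ⬝ᵥ X.mulVec d}

/-- The set of diagonally dominant symmetric matrices `DD_n`. -/
def DD (n : ℕ) : Set (Matrix (Fin n) (Fin n) ℝ) :=
  {A | A.IsSymm ∧ ∀ i, ∑ j ∈ Finset.univ.erase i, |A i j| ≤ A i i}

/-- The set of scaled diagonally dominant symmetric matrices `SDD_n`. -/
def SDD (n : ℕ) : Set (Matrix (Fin n) (Fin n) ℝ) :=
  {A | A.IsSymm ∧ ∃ D : Fin n → ℝ, (∀ i, 0 < D i) ∧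
    Matrix.diagonal D * A * Matrix.diagonal D ∈ DD n}

/-- The conical hull of a set of matrices. -/
def coneHull {n : ℕ} (K : Set (Matrix (Fin n) (Fin n) ℝ)) :
    Set (Matrix (Fin n) (Fin n) ℝ) :=
  {X | ∃ (k : ℕ) (c : Fin k → ℝ) (M : Fin k → Matrix (Fin n) (Fin n) ℝ),
    (∀ i, 0 ≤ c i) ∧ (∀ i, M i ∈ K) ∧ X = ∑ i, c i • M i}

/-- The dual cone within `S^n` w.r.t. the trace inner product. -/
def dualCone {n : ℕ} (K : Set (Matrix (Fin n) (Fin n) ℝ)) :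
    Set (Matrix (Fin n) (Fin n) ℝ) :=
  {A | A.IsSymm ∧ ∀ B ∈ K, 0 ≤ Matrix.trace (Aᵀ * B)}

/-- The SD basis of Type I, as a set. -/
def Bplus (n : ℕ) : Set (Matrix (Fin n) (Fin n) ℝ) :=
  {M | ∃ i j : Fin n, i ≤ j ∧ M = vecMulVec (e i + e j) (e i + e j)}

/-- The SD basis of Type II, as a set. -/
def Bminus (n : ℕ) : Set (Matrix (Fin n) (Fin n) ℝ) :=
  {M | ∃ i : Fin n, M = vecMulVec (e i + e i) (e i + e i)} ∪
    {M | ∃ i j : Fin n, i < j ∧ M = vecMulVec (e i - e j) (e i - e j)}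

/-- The expanded SD basis matrix `B̄_{i,j}(α) = (e_i + α e_j)(e_i + α e_j)ᵀ`. -/
def Bbar {n : ℕ} (α : ℝ) (i j : Fin n) : Matrix (Fin n) (Fin n) ℝ :=
  vecMulVec (e i + α • e j) (e i + α • e j)

/-- The expanded SD basis `B̄(α)`, as a set. -/
def BbarSet (n : ℕ) (α : ℝ) : Set (Matrix (Fin n) (Fin n) ℝ) :=
  {M | ∃ i j : Fin n, i ≤ j ∧ M = Bbar α i j}

/-- The space `S^n` of symmetric matrices as a submodule. -/
def symmSubmodule (n : ℕ) : Submodule ℝ (Matrix (Fin n) (Fin n) ℝ) where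
  carrier := {A | A.IsSymm}
  add_mem' := fun {A B} hA hB => by
    simp only [Set.mem_setOf_eq, Matrix.IsSymm, Matrix.transpose_add] at *
    rw [hA, hB]
  zero_mem' := by simp [Matrix.IsSymm]
  smul_mem' := fun c A hA => by
    simp only [Set.mem_setOf_eq, Matrix.IsSymm, Matrix.transpose_smul] at *
    rw [hA]

/-- Index set for pairs `1 ≤ i ≤ j ≤ n`. -/
abbrev SymIdx (n : ℕ) := {p : Fin n × Fin n // p.1 ≤ p.2}



lemma e_apply' {n : ℕ} (p q : Fin n) : e p q = if q = p then 1 else 0 := Pi.single_apply p 1 q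

lemma key_ineq {n : ℕ} (α₁ α₂ m : ℝ) (i j p q : Fin n) (hij : i < j) (hpq : p ≤ q)
    (hm1 : m ≤ α₂^2) (hm2 : m ≤ (α₁-α₂)^2) :
    m * ((e p + α₁ • e q) i)^2 ≤ ((e p + α₁ • e q) j - α₂ * ((e p + α₁ • e q) i))^2 := by
  by_cases hpi : p = i
  · by_cases hqi : q = i
    · have hvi : (e p + α₁ • e q) i = 1 + α₁ := by simp [e_apply', hpi, hqi]
      have hvj : (e p + α₁ • e q) j = 0 := by simp [e_apply', hpi, hqi, hij.ne']
      rw [hvi, hvj]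
      nlinarith [mul_nonneg (sub_nonneg.2 hm1) (sq_nonneg (1 + α₁))]
    · by_cases hqj : q = j
      · have hvi : (e p + α₁ • e q) i = 1 := by simp [e_apply', hpi, hqj, hij.ne]
        have hvj : (e p + α₁ • e q) j = α₁ := by simp [e_apply', hpi, hqj, hij.ne']
        rw [hvi, hvj]
        nlinarith [hm2]
      · have hvi : (e p + α₁ • e q) i = 1 := by
          simp [e_apply', hpi, (Ne.symm hqi : i ≠ q)]
        have hvj : (e p + α₁ • e q) j = 0 := by
          simp [e_apply', hpi, hij.ne', (Ne.symm hqj : j ≠ q)]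
        rw [hvi, hvj]
        nlinarith [hm1]
  · by_cases hqi : q = i
    · have hpj : p ≠ j := fun h => absurd ((h ▸ hqi ▸ hpq : j ≤ i)) (not_le.2 hij)
      have hvi : (e p + α₁ • e q) i = α₁ := by
        simp [e_apply', hqi, (Ne.symm hpi : i ≠ p)]
      have hvj : (e p + α₁ • e q) j = 0 := by
        simp [e_apply', hqi, hij.ne', (Ne.symm hpj : j ≠ p)]
      rw [hvi, hvj]
      nlinarith [mul_nonneg (sub_nonneg.2 hm1) (sq_nonneg α₁)]
    · have hvi : (e p + α₁ • e q) i = 0 := by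
        simp [e_apply', (Ne.symm hpi : i ≠ p), (Ne.symm hqi : i ≠ q)]
      rw [hvi]
      nlinarith [sq_nonneg ((e p + α₁ • e q) j)]

/-- for `α₁ ∉ {0, -1}` and `α₂ ∉ {0, α₁}`, the matrix
`(e_i + α₂ e_j)(e_i + α₂ e_j)ᵀ` does not belong to `cone(B̄(α₁))`. -/
theorem stmt12 (n : ℕ) (hn : 0 < n) (α₁ α₂ : ℝ)
    (h1 : α₁ ≠ 0) (h2 : α₁ ≠ -1) (h3 : α₂ ≠ 0) (h4 : α₂ ≠ α₁)
    (i j : Fin n) (hij : i < j) :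
    vecMulVec (e i + α₂ • e j) (e i + α₂ • e j) ∉ coneHull (BbarSet n α₁) := by
  rintro ⟨k, c, M, hc, hM, hX⟩
  set m : ℝ := min (α₂^2) ((α₁-α₂)^2) with hm
  have hm_pos : 0 < m := by
    apply lt_min
    · positivity
    · have : α₁ - α₂ ≠ 0 := sub_ne_zero.2 (fun h => h4 h.symm)
      positivity
  have hm1 : m ≤ α₂^2 := min_le_left _ _
  have hm2 : m ≤ (α₁-α₂)^2 := min_le_right _ _
  set φ : Matrix (Fin n) (Fin n) ℝ → ℝ :=
    fun X => X j j - α₂ * (X i j + X j i) + (α₂^2 - m) * X i i with hφ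
  have happ : ∀ a b : Fin n, (∑ t, c t • M t) a b = ∑ t, c t * M t a b := by
    intro a b
    rw [Matrix.sum_apply]
    simp
  have hterm : ∀ t, 0 ≤ c t * φ (M t) := by
    intro t
    obtain ⟨p, q, hpq, hMt⟩ := hM t
    apply mul_nonneg (hc t)
    rw [hMt]
    have hk := key_ineq α₁ α₂ m i j p q hij hpq hm1 hm2
    simp only [hφ, Bbar, Matrix.vecMulVec_apply]
    nlinarith [hk]
  have hR : 0 ≤ φ (∑ t, c t • M t) := by
    have : φ (∑ t, c t • M t) = ∑ t, c t * φ (M t) := by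
      simp only [hφ, happ, Finset.mul_sum, ← Finset.sum_sub_distrib,
        ← Finset.sum_add_distrib]
      exact Finset.sum_congr rfl fun t _ => by ring
    rw [this]
    exact Finset.sum_nonneg fun t _ => hterm t
  have hL : φ (vecMulVec (e i + α₂ • e j) (e i + α₂ • e j)) = -m := by
    have hwi : (e i + α₂ • e j) i = 1 := by
      simp [e_apply', hij.ne]
    have hwj : (e i + α₂ • e j) j = α₂ := by
      simp [e_apply', hij.ne']
    simp only [hφ, Matrix.vecMulVec_apply, hwi, hwj]
    ring
  rw [← hX, hL] at hR
  linarith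
end
end

section
/- For every positive integer n, cone(⋃_{α ∈ ℝ} B̄(α)) = SDD_n: the conical hull of the union over all real parameters α of the expanded SD bases equals the set of scaled diagonally dominant symmetric matrices. -/
open Matrix Finset

noncomputable section

lemma dot_expand {n : ℕ} (M : Matrix (Fin n) (Fin n) ℝ) (v w : Fin n → ℝ) :
    v ⬝ᵥ M.mulVec w = ∑ i, ∑ j, v i * (M i j * w j) := by
  simp [dotProduct, mulVec, Finset.mul_sum]

lemma mulVec_eq_zero_of_quad_zero {n : ℕ} {M : Matrix (Fin n) (Fin n) ℝ}
    (hsym : ∀ i j, M i j = M j i)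
    (hpsd : ∀ y : Fin n → ℝ, 0 ≤ y ⬝ᵥ M.mulVec y)
    {w : Fin n → ℝ} (hw : w ⬝ᵥ M.mulVec w = 0) : M.mulVec w = 0 := by
  funext i
  by_contra hc
  set c := M.mulVec w i with hcdef
  have hc0 : c ≠ 0 := hc
  have hMii : 0 ≤ M i i := by
    have h := hpsd (fun a => if a = i then 1 else 0)
    rw [dot_expand] at h
    simpa using h
  have key : ∀ t : ℝ, 0 ≤ 2*c*t + M i i * t^2 := by
    intro t
    have h := hpsd (fun a => w a + (if a = i then t else 0))
    rw [dot_expand] at h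
    have h1 : ∀ a b : Fin n, (w a + (if a = i then t else 0)) * (M a b * (w b + (if b = i then t else 0)))
        = w a * (M a b * w b) + (if a = i then t * (M i b * w b) else 0)
          + (if b = i then t * (w a * M a i) else 0)
          + (if a = i then (if b = i then M i i * t^2 else 0) else 0) := by
      intro a b
      by_cases ha : a = i <;> by_cases hb : b = i <;> simp [ha, hb] <;> ring
    simp only [h1, Finset.sum_add_distrib] at h
    have e1 : ∑ a : Fin n, ∑ b : Fin n, (if a = i then t * (M i b * w b) else 0) = t * c := by
      rw [Finset.sum_comm]
      simp [← Finset.mul_sum]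
      rw [hcdef]
      simp [mulVec, dotProduct, Finset.mul_sum]
    have e2 : ∑ a : Fin n, ∑ b : Fin n, (if b = i then t * (w a * M a i) else 0) = t * c := by
      simp [← Finset.mul_sum]
      rw [hcdef]
      simp [mulVec, dotProduct]
      left
      exact Finset.sum_congr rfl (fun a _ => by rw [hsym a i]; ring)
    have e3 : ∑ a : Fin n, ∑ b : Fin n, (if a = i then (if b = i then M i i * t^2 else 0) else 0)
        = M i i * t^2 := by simp
    rw [e1, e2, e3, ← dot_expand, hw] at h
    linarith
  have h := key (-c/(M i i + 1))
  have hd1 : (0:ℝ) < M i i + 1 := by linarith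
  rw [div_eq_mul_inv] at h
  have hcsq : 0 < c^2 := by positivity
  have hne : (M i i + 1) ≠ 0 := ne_of_gt hd1
  have heq : 2 * c * (-c * (M i i + 1)⁻¹) + M i i * (-c * (M i i + 1)⁻¹) ^ 2
      = -(c^2 * (M i i + 2)) * (((M i i + 1)^2)⁻¹) := by
    field_simp
    ring
  rw [heq] at h
  have hneg : -(c^2 * (M i i + 2)) * (((M i i + 1)^2)⁻¹) < 0 := by
    apply mul_neg_of_neg_of_pos
    · nlinarith
    · positivity
  linarith

lemma submatrix_psd {n m : ℕ} (M : Matrix (Fin n) (Fin n) ℝ)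
    (hpsd : ∀ y : Fin n → ℝ, 0 ≤ y ⬝ᵥ M.mulVec y) (f : Fin m → Fin n) :
    ∀ z : Fin m → ℝ, 0 ≤ z ⬝ᵥ (M.submatrix f f).mulVec z := by
  intro z
  set y : Fin n → ℝ := fun j => ∑ a, if f a = j then z a else 0 with hy
  have hsum : ∀ g : Fin n → ℝ, ∑ j, y j * g j = ∑ a, z a * g (f a) := by
    intro g
    simp only [hy, Finset.sum_mul]
    rw [Finset.sum_comm]
    refine Finset.sum_congr rfl (fun a _ => ?_)
    simp [ite_mul]
  have key : y ⬝ᵥ M.mulVec y = z ⬝ᵥ (M.submatrix f f).mulVec z := by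
    rw [dot_expand, dot_expand]
    have st1 : ∀ j : Fin n, ∑ j' , y j * (M j j' * y j') = y j * (∑ j', y j' * M j j') := by
      intro j; rw [Finset.mul_sum]; exact Finset.sum_congr rfl (fun j' _ => by ring)
    simp only [st1]
    have := hsum (fun j => ∑ j', y j' * M j j')
    rw [this]
    refine Finset.sum_congr rfl (fun a _ => ?_)
    have := hsum (fun j' => M (f a) j')
    rw [this, Finset.mul_sum]
    refine Finset.sum_congr rfl (fun b _ => ?_)
    show z a * (z b * M (f a) (f b)) = z a * (M.submatrix f f a b * z b)
    rw [Matrix.submatrix_apply]; ring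
  rw [← key]; exact hpsd y

lemma exists_pos_scaling : ∀ (n : ℕ) (M : Matrix (Fin n) (Fin n) ℝ),
    (∀ i j, M i j = M j i) → (∀ i j, i ≠ j → M i j ≤ 0) →
    (∀ y : Fin n → ℝ, 0 ≤ y ⬝ᵥ M.mulVec y) →
    ∃ x : Fin n → ℝ, (∀ i, 0 < x i) ∧ ∀ i, 0 ≤ M.mulVec x i := by
  intro n
  induction n using Nat.strong_induction_on with
  | _ n IH =>
  intro M hsym hZ hpsd
  by_cases hdet : M.det = 0
  · -- singular case
    obtain ⟨u, hu0, hMu⟩ := (Matrix.exists_mulVec_eq_zero_iff).mpr hdet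
    set w : Fin n → ℝ := fun i => |u i| with hwdef
    have hwnn : ∀ i, 0 ≤ w i := fun i => abs_nonneg _
    have hquad : w ⬝ᵥ M.mulVec w = 0 := by
      have h1 : w ⬝ᵥ M.mulVec w ≤ u ⬝ᵥ M.mulVec u := by
        rw [dot_expand, dot_expand]
        refine Finset.sum_le_sum (fun i _ => Finset.sum_le_sum (fun j _ => ?_))
        by_cases hij : i = j
        · subst hij
          have : w i * (M i i * w i) = u i * (M i i * u i) := by
            simp only [hwdef]
            rw [show |u i| * (M i i * |u i|) = M i i * (|u i| * |u i|) by ring,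
              abs_mul_abs_self]
            ring
          rw [this]
        · have h2 : u i * u j ≤ w i * w j := by
            calc u i * u j ≤ |u i * u j| := le_abs_self _
            _ = w i * w j := abs_mul _ _
          nlinarith [hZ i j hij, h2]
      have h2 : u ⬝ᵥ M.mulVec u = 0 := by rw [hMu]; simp
      have h3 := hpsd w
      linarith
    have hMw : M.mulVec w = 0 := mulVec_eq_zero_of_quad_zero hsym hpsd hquad
    classical
    set S : Finset (Fin n) := Finset.univ.filter (fun i => 0 < w i) with hS
    have hSne : S.Nonempty := by
      have h : ∃ i, u i ≠ 0 := by
        by_contra hall; push_neg at hall; exact hu0 (funext fun i => hall i)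
      obtain ⟨i, hi⟩ := h
      refine ⟨i, ?_⟩
      simp only [hS, Finset.mem_filter, Finset.mem_univ, true_and, hwdef]
      exact abs_pos.mpr hi
    have hwS : ∀ i, i ∉ S → w i = 0 := by
      intro i hi
      simp only [hS, Finset.mem_filter, Finset.mem_univ, true_and, not_lt] at hi
      exact le_antisymm hi (hwnn i)
    have hwrow : ∀ i, ∑ j', M i j' * w j' = 0 := by
      intro i
      have := congrFun hMw i
      simpa [mulVec, dotProduct] using this
    have hcross : ∀ i ∉ S, ∀ j ∈ S, M i j = 0 := by
      intro i hi j hj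
      have hterms : ∀ j' ∈ Finset.univ, M i j' * w j' ≤ 0 := by
        intro j' _
        by_cases hj' : j' ∈ S
        · have hij : i ≠ j' := fun h => hi (h ▸ hj')
          exact mul_nonpos_of_nonpos_of_nonneg (hZ i j' hij) (hwnn j')
        · rw [hwS j' hj']; simp
      have := (Finset.sum_eq_zero_iff_of_nonpos hterms).mp (hwrow i) j (Finset.mem_univ j)
      have hwj : 0 < w j := by
        simp only [hS, Finset.mem_filter, Finset.mem_univ, true_and] at hj; exact hj
      exact (mul_eq_zero.mp this).resolve_right (ne_of_gt hwj)
    -- submatrix on Sᶜ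
    set m : ℕ := (Sᶜ).card with hm
    have hmn : m < n := by
      have h1 : 0 < S.card := Finset.card_pos.mpr hSne
      have h2 := Finset.card_compl S (α := Fin n)
      have h3 : S.card ≤ n := by simpa using Finset.card_le_univ S
      simp only [Fintype.card_fin] at h2
      omega
    set iso := (Sᶜ).orderIsoOfFin rfl with hiso
    set f : Fin m → Fin n := fun a => (iso a : Fin n) with hf
    have hfmem : ∀ a, f a ∈ Sᶜ := fun a => (iso a).2
    have hfinj : Function.Injective f := by
      intro a b hab
      exact iso.injective (Subtype.ext hab)
    obtain ⟨y, hy, hMy⟩ := IH m hmn (M.submatrix f f)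
      (fun a b => hsym (f a) (f b))
      (fun a b hab => hZ (f a) (f b) (fun h => hab (hfinj h)))
      (submatrix_psd M hpsd f)
    set x : Fin n → ℝ := fun j => if hj : j ∈ Sᶜ then y (iso.symm ⟨j, hj⟩) else w j with hx
    have hxS : ∀ j ∈ S, x j = w j := by
      intro j hj
      have hj' : j ∉ Sᶜ := by simpa using hj
      simp only [hx]
      rw [dif_neg hj']
    have hxpos : ∀ j, 0 < x j := by
      intro j
      by_cases hj : j ∈ Sᶜ
      · simp only [hx, dif_pos hj]; exact hy _
      · have hjS : j ∈ S := by simpa using hj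
        rw [hxS j hjS]
        simp only [hS, Finset.mem_filter, Finset.mem_univ, true_and] at hjS; exact hjS
    refine ⟨x, hxpos, fun i => ?_⟩
    have hsplit : (M.mulVec x) i = ∑ j ∈ S, M i j * x j + ∑ j ∈ Sᶜ, M i j * x j := by
      simp only [mulVec, dotProduct]
      exact (Finset.sum_add_sum_compl S _).symm
    have hSpart : ∑ j ∈ S, M i j * x j = 0 := by
      have h1 : ∑ j ∈ S, M i j * x j = ∑ j ∈ S, M i j * w j :=
        Finset.sum_congr rfl (fun j hj => by rw [hxS j hj])
      have h2 : ∑ j ∈ S, M i j * w j = ∑ j', M i j' * w j' :=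
        Finset.sum_subset (Finset.subset_univ S)
          (fun j _ hj => by rw [hwS j hj]; ring)
      rw [h1, h2, hwrow i]
    by_cases hi : i ∈ Sᶜ
    · -- i not in S : use the inductive vector
      set a₀ := iso.symm ⟨i, hi⟩ with ha₀
      have hfa₀ : f a₀ = i := by
        simp only [hf, ha₀]
        rw [OrderIso.apply_symm_apply]
      have hCpart : ∑ j ∈ Sᶜ, M i j * x j = ((M.submatrix f f).mulVec y) a₀ := by
        have h1 : ∑ j ∈ Sᶜ, M i j * x j = ∑ p : {j // j ∈ Sᶜ}, M i p * x p := by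
          rw [← Finset.sum_coe_sort]
        have h2 : ∑ p : {j // j ∈ Sᶜ}, M i (p : Fin n) * x p
            = ∑ a : Fin m, M i (f a) * x (f a) :=
          (Equiv.sum_comp iso.toEquiv (fun p : {j // j ∈ Sᶜ} => M i (p : Fin n) * x p)).symm
        have h3 : ∀ a : Fin m, x (f a) = y a := by
          intro a
          simp only [hx, dif_pos (hfmem a)]
          congr 1
          simp only [hf]
          rw [show (⟨(iso a : Fin n), hfmem a⟩ : {j // j ∈ Sᶜ}) = iso a from rfl,
            OrderIso.symm_apply_apply]
        rw [h1, h2]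
        simp only [mulVec, dotProduct, Matrix.submatrix_apply, hfa₀]
        exact Finset.sum_congr rfl (fun a _ => by rw [h3 a])
      rw [hsplit, hSpart, hCpart]
      simpa using hMy a₀
    · -- i in S : cross terms vanish
      have hiS : i ∈ S := by simpa using hi
      have hCpart : ∑ j ∈ Sᶜ, M i j * x j = 0 := by
        refine Finset.sum_eq_zero (fun j hj => ?_)
        have hjS : j ∉ S := by simpa using hj
        have : M j i = 0 := hcross j hjS i hiS
        rw [hsym i j, this, zero_mul]
      rw [hsplit, hSpart, hCpart]; simp
  · -- nonsingular case
    set x := M⁻¹.mulVec 1 with hx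
    have hMx : M.mulVec x = 1 := by
      rw [hx, Matrix.mulVec_mulVec, Matrix.mul_nonsing_inv _ (isUnit_iff_ne_zero.mpr hdet),
        Matrix.one_mulVec]
    have hxnn : ∀ i, 0 ≤ x i := by
      by_contra hneg
      push_neg at hneg
      obtain ⟨i0, hi0⟩ := hneg
      set z : Fin n → ℝ := fun i => max (-x i) 0 with hz
      set p : Fin n → ℝ := fun i => max (x i) 0 with hp
      have hxpz : x = p - z := by
        funext i
        simp only [hp, hz, Pi.sub_apply]
        rw [max_zero_sub_max_neg_zero_eq_self]
      have hzMx : z ⬝ᵥ M.mulVec x = ∑ i, z i := by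
        rw [hMx]; simp [dotProduct]
      have hpos : 0 < ∑ i, z i := by
        refine Finset.sum_pos' (fun i _ => le_max_right _ _) ⟨i0, Finset.mem_univ i0, ?_⟩
        simp only [hz]
        rw [lt_max_iff]; left; linarith
      have hzMp : z ⬝ᵥ M.mulVec p ≤ 0 := by
        rw [dot_expand]
        refine Finset.sum_nonpos (fun i _ => Finset.sum_nonpos (fun j _ => ?_))
        by_cases hzi : 0 < z i
        · by_cases hpj : 0 < p j
          · have hxi : x i < 0 := by
              by_contra hge; push_neg at hge
              simp only [hz, max_eq_right (by linarith : -x i ≤ (0:ℝ))] at hzi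
              exact lt_irrefl 0 hzi
            have hxj : 0 < x j := by
              by_contra hge; push_neg at hge
              simp only [hp, max_eq_right hge] at hpj
              exact lt_irrefl 0 hpj
            have hij : i ≠ j := fun h => by rw [h] at hxi; linarith
            have := hZ i j hij
            have hzinn : 0 ≤ z i := le_max_right _ _
            have hpjnn : 0 ≤ p j := le_max_right _ _
            have h4 : M i j * p j ≤ 0 := mul_nonpos_of_nonpos_of_nonneg this hpjnn
            nlinarith [mul_nonneg hzinn (neg_nonneg.mpr h4)]
          · have : p j = 0 := le_antisymm (not_lt.mp hpj) (le_max_right _ _)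
            rw [this]; simp
        · have : z i = 0 := le_antisymm (not_lt.mp hzi) (le_max_right _ _)
          rw [this]; simp
      have hzMz : 0 ≤ z ⬝ᵥ M.mulVec z := hpsd z
      have hsub : z ⬝ᵥ M.mulVec x = z ⬝ᵥ M.mulVec p - z ⬝ᵥ M.mulVec z := by
        rw [hxpz, Matrix.mulVec_sub, dotProduct_sub]
      rw [hzMx] at hsub
      linarith
    have hxpos : ∀ i, 0 < x i := by
      intro i
      rcases (hxnn i).lt_or_eq with h | h
      · exact h
      · exfalso
        have h1 : (M.mulVec x) i = 1 := by rw [hMx]; rfl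
        have h2 : (M.mulVec x) i ≤ 0 := by
          have : (M.mulVec x) i = ∑ j, M i j * x j := by simp [mulVec, dotProduct]
          rw [this]
          refine Finset.sum_nonpos (fun j _ => ?_)
          by_cases hij : j = i
          · rw [hij, ← h]; simp
          · exact mul_nonpos_of_nonpos_of_nonneg (hZ i j (Ne.symm hij)) (hxnn j)
        linarith
    exact ⟨x, hxpos, fun i => by rw [hMx]; exact zero_le_one⟩

lemma cone_subset_SDD {n : ℕ} :
    coneHull (⋃ α : ℝ, BbarSet n α) ⊆ SDD n := by
  classical
  rintro X ⟨k, c, Mf, hc, hmem, hsum⟩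
  have h : ∀ t, ∃ (a : ℝ) (pq : Fin n × Fin n), pq.1 ≤ pq.2 ∧ Mf t = Bbar a pq.1 pq.2 := by
    intro t
    obtain ⟨a, ha⟩ := Set.mem_iUnion.mp (hmem t)
    obtain ⟨pp, qq, hpq, hB⟩ := ha
    exact ⟨a, (pp, qq), hpq, hB⟩
  choose a pq hpq hB using h
  set p : Fin k → Fin n := fun t => (pq t).1 with hp
  set q : Fin k → Fin n := fun t => (pq t).2 with hq
  set v : Fin k → Fin n → ℝ := fun t => e (p t) + a t • e (q t) with hv
  have hXe : ∀ i j, X i j = ∑ t, c t * (v t i * v t j) := by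
    intro i j
    rw [hsum, Matrix.sum_apply]
    refine Finset.sum_congr rfl (fun t _ => ?_)
    rw [Matrix.smul_apply, hB t, smul_eq_mul]
    rfl
  have hXsym : ∀ i j, X i j = X j i := by
    intro i j; rw [hXe, hXe]
    exact Finset.sum_congr rfl (fun t _ => by ring)
  have hvsupp : ∀ t i, i ≠ p t → i ≠ q t → v t i = 0 := by
    intro t i h1 h2
    simp [hv, e, Pi.single_apply, h1, h2]
  -- comparison matrix
  set Mc : Matrix (Fin n) (Fin n) ℝ :=
    Matrix.of (fun i j => if i = j then X i i else -|X i j|) with hMc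
  have hMcs : ∀ i j, Mc i j = Mc j i := by
    intro i j
    by_cases hij : i = j
    · rw [hij]
    · simp only [hMc, Matrix.of_apply, if_neg hij, if_neg (Ne.symm hij)]
      rw [hXsym i j]
  have hMcZ : ∀ i j, i ≠ j → Mc i j ≤ 0 := by
    intro i j hij
    simp only [hMc, Matrix.of_apply, if_neg hij]
    simp [abs_nonneg]
  have hdiag : ∀ i, X i i = ∑ t, c t * (v t i)^2 := by
    intro i; rw [hXe]; exact Finset.sum_congr rfl (fun t _ => by ring)
  have habs : ∀ i j, |X i j| ≤ ∑ t, c t * (|v t i| * |v t j|) := by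
    intro i j
    rw [hXe]
    refine le_trans (Finset.abs_sum_le_sum_abs _ _) (Finset.sum_le_sum (fun t _ => ?_))
    rw [abs_mul, abs_mul, abs_of_nonneg (hc t)]
  have hMcpsd : ∀ y : Fin n → ℝ, 0 ≤ y ⬝ᵥ Mc.mulVec y := by
    intro y
    set z : Fin n → ℝ := fun i => |y i| with hz
    have step1 : ∀ i j, z i * (Mc i j * z j) ≤ y i * (Mc i j * y j) := by
      intro i j
      by_cases hij : i = j
      · subst hij
        simp only [hMc, Matrix.of_apply, eq_self_iff_true, if_true, hz]
        rw [show |y i| * (X i i * |y i|) = X i i * (|y i| * |y i|) by ring, abs_mul_abs_self]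
        ring_nf; exact le_refl _
      · simp only [hMc, Matrix.of_apply, if_neg hij, hz]
        have h1 : y i * y j ≤ |y i| * |y j| := by
          calc y i * y j ≤ |y i * y j| := le_abs_self _
          _ = |y i| * |y j| := abs_mul _ _
        nlinarith [abs_nonneg (X i j)]
    have step2 : 0 ≤ z ⬝ᵥ Mc.mulVec z → 0 ≤ y ⬝ᵥ Mc.mulVec y := by
      intro h
      rw [dot_expand] at h ⊢
      refine le_trans h (Finset.sum_le_sum (fun i _ => Finset.sum_le_sum (fun j _ => step1 i j)))
    apply step2
    rw [dot_expand]
    -- lower bound entrywise by per-generator quantities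
    have znn : ∀ i, 0 ≤ z i := fun i => abs_nonneg _
    set w : Fin k → Fin n → ℝ := fun t i => |v t i| * z i with hw
    have hwnn : ∀ t i, 0 ≤ w t i := fun t i => mul_nonneg (abs_nonneg _) (znn i)
    have hlow : ∀ i j, (∑ t, (if i = j then c t * (w t i)^2 else -(c t * (w t i * w t j))))
        ≤ z i * (Mc i j * z j) := by
      intro i j
      by_cases hij : i = j
      · subst hij
        simp only [eq_self_iff_true, if_true, hMc, Matrix.of_apply]
        rw [show z i * (X i i * z i) = X i i * (z i)^2 by ring, hdiag i, Finset.sum_mul]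
        refine le_of_eq (Finset.sum_congr rfl (fun t _ => ?_))
        simp only [hw, hz, mul_pow, sq_abs]
        ring
      · simp only [if_neg hij, hMc, Matrix.of_apply]
        have h1 : |X i j| * (z i * z j) ≤ (∑ t, c t * (|v t i| * |v t j|)) * (z i * z j) :=
          mul_le_mul_of_nonneg_right (habs i j) (mul_nonneg (znn i) (znn j))
        rw [Finset.sum_mul] at h1
        have h2 : ∑ t, c t * (|v t i| * |v t j|) * (z i * z j) = ∑ t, c t * (w t i * w t j) :=
          Finset.sum_congr rfl (fun t _ => by simp only [hw]; ring)
        rw [h2] at h1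
        have hR : z i * (-|X i j| * z j) = -(|X i j| * (z i * z j)) := by ring
        have hL : ∑ t, -(c t * (w t i * w t j)) = -∑ t, c t * (w t i * w t j) := by
          simp
        rw [hR, hL]
        exact neg_le_neg h1
    have hswap : ∑ i, ∑ j, z i * (Mc i j * z j)
        ≥ ∑ t, ∑ i, ∑ j, (if i = j then c t * (w t i)^2 else -(c t * (w t i * w t j))) := by
      rw [show ∑ t, ∑ i, ∑ j, (if i = j then c t * (w t i)^2 else -(c t * (w t i * w t j)))
          = ∑ i, ∑ j, ∑ t, (if i = j then c t * (w t i)^2 else -(c t * (w t i * w t j))) by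
        rw [Finset.sum_comm]
        exact Finset.sum_congr rfl (fun i _ => Finset.sum_comm)]
      exact Finset.sum_le_sum (fun i _ => Finset.sum_le_sum (fun j _ => hlow i j))
    refine le_trans ?_ hswap
    refine Finset.sum_nonneg (fun t _ => ?_)
    -- per generator : 2 Σ w² - (Σ w)² ≥ 0 using support ⊆ {p t, q t}
    have hident : ∑ i, ∑ j, (if i = j then c t * (w t i)^2 else -(c t * (w t i * w t j)))
        = 2 * c t * (∑ i, (w t i)^2) - c t * (∑ i, w t i)^2 := by
      have h1 : ∀ i j : Fin n, (if i = j then c t * (w t i)^2 else -(c t * (w t i * w t j)))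
          = (if i = j then 2 * c t * (w t i)^2 else 0) - c t * (w t i * w t j) := by
        intro i j; split
        · next h => subst h; ring
        · ring
      simp only [h1, Finset.sum_sub_distrib]
      congr 1
      · rw [show (2:ℝ) * c t * ∑ i, (w t i)^2 = ∑ i, 2 * c t * (w t i)^2 by
          rw [Finset.mul_sum]]
        refine Finset.sum_congr rfl (fun i _ => ?_)
        rw [Finset.sum_ite_eq univ i (fun j => 2 * c t * (w t i)^2)]
        simp
      · have hexp : c t * (∑ i, w t i)^2 = ∑ i, ∑ j, c t * (w t i * w t j) := by
          rw [sq, Finset.sum_mul_sum, Finset.mul_sum]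
          refine Finset.sum_congr rfl (fun i _ => ?_)
          rw [Finset.mul_sum]
        rw [hexp]
    rw [hident]
    have hsupp : ∀ i, i ≠ p t → i ≠ q t → w t i = 0 := by
      intro i h1 h2; simp [hw, hvsupp t i h1 h2]
    have hsum_le : (∑ i, w t i) = w t (p t) + w t (q t) - (if p t = q t then w t (p t) else 0) := by
      rw [show (univ : Finset (Fin n)) = univ from rfl]
      rw [← Finset.sum_subset (Finset.subset_univ {p t, q t})
        (fun i _ hi => hsupp i (by simp at hi; tauto) (by simp at hi; tauto))]
      by_cases hpq' : p t = q t
      · simp [hpq', if_pos]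
      · rw [Finset.sum_insert (by simp [hpq']), Finset.sum_singleton, if_neg hpq']
        ring
    have hsq_le : (∑ i, w t i)^2 ≤ 2 * ∑ i, (w t i)^2 := by
      rw [hsum_le]
      by_cases hpq' : p t = q t
      · rw [if_pos hpq']
        have h1 : (w t (p t))^2 ≤ ∑ i, (w t i)^2 :=
          Finset.single_le_sum (f := fun i => (w t i)^2) (fun i _ => sq_nonneg _)
            (Finset.mem_univ (p t))
        have : w t (p t) + w t (q t) - w t (p t) = w t (q t) := by ring
        rw [this, ← hpq']
        nlinarith [sq_nonneg (w t (p t))]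
      · rw [if_neg hpq']
        have h1 : (w t (p t))^2 + (w t (q t))^2 ≤ ∑ i, (w t i)^2 := by
          rw [show (w t (p t))^2 + (w t (q t))^2 = ∑ i ∈ ({p t, q t} : Finset (Fin n)), (w t i)^2 by
            rw [Finset.sum_insert (by simp [hpq']), Finset.sum_singleton]]
          exact Finset.sum_le_sum_of_subset_of_nonneg (Finset.subset_univ _)
            (fun i _ _ => sq_nonneg _)
        nlinarith [sq_nonneg (w t (p t) - w t (q t))]
    nlinarith [hc t, Finset.sum_nonneg (fun i (_ : i ∈ univ) => sq_nonneg (w t i)), hsq_le]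
  -- apply the key lemma
  obtain ⟨x, hxpos, hMcx⟩ := exists_pos_scaling n Mc hMcs hMcZ hMcpsd
  have hXisSymm : X.IsSymm := by
    ext i j
    rw [Matrix.transpose_apply]
    exact hXsym j i
  refine ⟨hXisSymm, x, hxpos, ?_, ?_⟩
  · -- IsSymm of scaled matrix
    ext i j
    rw [Matrix.transpose_apply, Matrix.mul_diagonal, Matrix.mul_diagonal,
      Matrix.diagonal_mul, Matrix.diagonal_mul, hXsym j i]
    ring
  · intro i
    have hrow : 0 ≤ ∑ j, Mc i j * x j := by
      have := hMcx i
      simpa [mulVec, dotProduct] using this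
    have hsplit : ∑ j, Mc i j * x j
        = X i i * x i + ∑ j ∈ univ.erase i, -|X i j| * x j := by
      rw [← Finset.add_sum_erase univ _ (Finset.mem_univ i)]
      congr 1
      · simp [hMc]
      · refine Finset.sum_congr rfl (fun j hj => ?_)
        have : i ≠ j := Ne.symm (Finset.mem_erase.mp hj).1
        simp [hMc, this]
    have key : ∑ j ∈ univ.erase i, |X i j| * x j ≤ X i i * x i := by
      rw [hsplit] at hrow
      have : ∑ j ∈ univ.erase i, -|X i j| * x j = -∑ j ∈ univ.erase i, |X i j| * x j := by
        simp [neg_mul]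
      rw [this] at hrow
      linarith
    have hgoal : ∑ j ∈ univ.erase i, |(Matrix.diagonal x * X * Matrix.diagonal x) i j|
        ≤ (Matrix.diagonal x * X * Matrix.diagonal x) i i := by
      have he : ∀ j, (Matrix.diagonal x * X * Matrix.diagonal x) i j = x i * X i j * x j := by
        intro j
        rw [Matrix.mul_diagonal, Matrix.diagonal_mul]
      calc ∑ j ∈ univ.erase i, |(Matrix.diagonal x * X * Matrix.diagonal x) i j|
          = ∑ j ∈ univ.erase i, x i * (|X i j| * x j) := by
            refine Finset.sum_congr rfl (fun j _ => ?_)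
            rw [he j, abs_mul, abs_mul, abs_of_pos (hxpos i), abs_of_pos (hxpos j)]
            ring
        _ = x i * ∑ j ∈ univ.erase i, |X i j| * x j := by rw [Finset.mul_sum]
        _ ≤ x i * (X i i * x i) := mul_le_mul_of_nonneg_left key (le_of_lt (hxpos i))
        _ = (Matrix.diagonal x * X * Matrix.diagonal x) i i := by rw [he i]; ring
    exact hgoal

lemma sign_mul_abs' (x : ℝ) : Real.sign x * |x| = x := by
  rcases lt_trichotomy x 0 with h|h|h
  · rw [Real.sign_of_neg h, abs_of_neg h]; ring
  · simp [h]
  · rw [Real.sign_of_pos h, abs_of_pos h]; ring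

lemma sign_sq_mul (x y : ℝ) : Real.sign x ^ 2 * |x| * y = |x| * y := by
  rcases eq_or_ne x 0 with h|h
  · simp [h]
  · rcases Real.sign_apply_eq_of_ne_zero x h with h1|h1 <;> rw [h1] <;> ring

lemma offdiag_coeff (x di da : ℝ) (hdi : di ≠ 0) (hda : da ≠ 0) :
    |x| * da / di * (Real.sign x * di / da) = x := by
  rcases lt_trichotomy x 0 with h|h|h
  · rw [Real.sign_of_neg h, abs_of_neg h]; field_simp
  · simp [h]
  · rw [Real.sign_of_pos h, abs_of_pos h]; field_simp

lemma diag_coeff (x di da : ℝ) (hdi : di ≠ 0) (hda : da ≠ 0) :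
    |x| * da / di * (Real.sign x * di / da)^2 = |x| * di / da := by
  rcases eq_or_ne x 0 with h|h
  · simp [h]
  · rcases Real.sign_apply_eq_of_ne_zero x h with h1|h1 <;> rw [h1] <;> field_simp <;> ring

def cP {n : ℕ} (A : Matrix (Fin n) (Fin n) ℝ) (D : Fin n → ℝ) (p : Fin n × Fin n) : ℝ :=
  if p.1 < p.2 then |A p.1 p.2| * D p.2 / D p.1
  else if p.1 = p.2 then A p.1 p.1 - ∑ j ∈ Finset.univ.erase p.1, |A p.1 j| * D j / D p.1
  else 0

def alP {n : ℕ} (A : Matrix (Fin n) (Fin n) ℝ) (D : Fin n → ℝ) (p : Fin n × Fin n) : ℝ :=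
  if p.1 < p.2 then Real.sign (A p.1 p.2) * D p.1 / D p.2 else 0

def MP {n : ℕ} (A : Matrix (Fin n) (Fin n) ℝ) (D : Fin n → ℝ) (p : Fin n × Fin n) :
    Matrix (Fin n) (Fin n) ℝ :=
  if p.1 ≤ p.2 then Bbar (alP A D p) p.1 p.2 else Bbar 0 p.1 p.1

lemma SDD_subset_cone {n : ℕ} : SDD n ⊆ coneHull (⋃ α : ℝ, BbarSet n α) := by
  classical
  rintro A ⟨hAs, D, hD, _, hMdd⟩
  have hAsym : ∀ i j, A i j = A j i := fun i j => hAs.apply j i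
  have hE : ∀ i j, (Matrix.diagonal D * A * Matrix.diagonal D) i j = D i * A i j * D j :=
    fun i j => by rw [Matrix.mul_diagonal, Matrix.diagonal_mul]
  have hdd : ∀ i, ∑ j ∈ univ.erase i, |A i j| * D j / D i ≤ A i i := by
    intro i
    have h := hMdd i
    simp only [hE] at h
    have h2 : ∑ j ∈ univ.erase i, |A i j| * D j / D i
        = (∑ j ∈ univ.erase i, |D i * A i j * D j|) / (D i * D i) := by
      rw [Finset.sum_div]
      refine Finset.sum_congr rfl (fun j _ => ?_)
      rw [abs_mul, abs_mul, abs_of_pos (hD i), abs_of_pos (hD j)]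
      have hDi : (D i) ≠ 0 := ne_of_gt (hD i)
      field_simp
    rw [h2, div_le_iff₀ (mul_pos (hD i) (hD i))]
    calc (∑ j ∈ univ.erase i, |D i * A i j * D j|) ≤ D i * A i i * D i := h
    _ = A i i * (D i * D i) := by ring
  refine ⟨n * n, fun s => cP A D (finProdFinEquiv.symm s),
    fun s => MP A D (finProdFinEquiv.symm s), ?_, ?_, ?_⟩
  · -- nonnegativity
    intro s
    show 0 ≤ cP A D (finProdFinEquiv.symm s)
    set p := finProdFinEquiv.symm s
    rw [cP]
    split
    · exact div_nonneg (mul_nonneg (abs_nonneg _) (hD p.2).le) (hD p.1).le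
    · split
      · next h =>
        rw [h]
        exact sub_nonneg.mpr (hdd p.2)
      · exact le_refl 0
  · -- membership
    intro s
    show MP A D (finProdFinEquiv.symm s) ∈ _
    set p := finProdFinEquiv.symm s with hp
    rw [Set.mem_iUnion]
    by_cases hle : p.1 ≤ p.2
    · exact ⟨alP A D p, p.1, p.2, hle, by rw [MP, if_pos hle]⟩
    · exact ⟨0, p.1, p.1, le_refl _, by rw [MP, if_neg hle]⟩
  · -- the sum identity
    rw [Equiv.sum_comp finProdFinEquiv.symm (fun p => cP A D p • MP A D p)]
    ext a b
    rw [Matrix.sum_apply]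
    have hterm : ∀ p : Fin n × Fin n, (cP A D p • MP A D p) a b
        = cP A D p * (((if a = p.1 then (1:ℝ) else 0) + alP A D p * (if a = p.2 then 1 else 0))
          * ((if b = p.1 then (1:ℝ) else 0) + alP A D p * (if b = p.2 then 1 else 0))) := by
      intro p
      rw [Matrix.smul_apply, smul_eq_mul]
      by_cases hle : p.1 ≤ p.2
      · have hMPp : MP A D p = Bbar (alP A D p) p.1 p.2 := by rw [MP, if_pos hle]
        rw [hMPp]
        congr 1
        show (e p.1 + alP A D p • e p.2) a * (e p.1 + alP A D p • e p.2) b = _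
        simp only [Pi.add_apply, Pi.smul_apply, smul_eq_mul, e, Pi.single_apply]
      · have hc : cP A D p = 0 := by
          rw [cP, if_neg (fun h => hle (le_of_lt h)), if_neg (fun h => hle (le_of_eq h))]
        rw [hc, zero_mul, zero_mul]
    simp only [hterm]
    rw [Fintype.sum_prod_type]
    have hexpand : ∀ i j : Fin n,
        cP A D (i,j) * (((if a = i then (1:ℝ) else 0) + alP A D (i,j) * (if a = j then 1 else 0))
          * ((if b = i then (1:ℝ) else 0) + alP A D (i,j) * (if b = j then 1 else 0)))
        = cP A D (i,j) * (if a = i then 1 else 0) * (if b = i then 1 else 0)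
          + cP A D (i,j) * alP A D (i,j) * (if a = i then 1 else 0) * (if b = j then 1 else 0)
          + cP A D (i,j) * alP A D (i,j) * (if a = j then 1 else 0) * (if b = i then 1 else 0)
          + cP A D (i,j) * alP A D (i,j)^2 * (if a = j then 1 else 0) * (if b = j then 1 else 0) := by
      intro i j; ring
    simp only [hexpand, Finset.sum_add_distrib]
    have hS1 : ∑ i : Fin n, ∑ j : Fin n,
        cP A D (i,j) * (if a = i then (1:ℝ) else 0) * (if b = i then 1 else 0)
        = (if b = a then (1:ℝ) else 0) * ∑ j, cP A D (a, j) := by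
      rw [Finset.sum_eq_single a]
      · by_cases hba : b = a
        · simp [hba, Finset.sum_mul, mul_comm]
        · simp [hba]
      · intro i _ hia
        refine Finset.sum_eq_zero (fun j _ => ?_)
        have h' : ¬ (a = i) := fun h => hia h.symm
        rw [if_neg h', mul_zero, zero_mul]
      · intro h; exact absurd (Finset.mem_univ a) h
    have hS2 : ∑ i : Fin n, ∑ j : Fin n,
        cP A D (i,j) * alP A D (i,j) * (if a = i then (1:ℝ) else 0) * (if b = j then 1 else 0)
        = cP A D (a,b) * alP A D (a,b) := by
      rw [Finset.sum_eq_single a]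
      · rw [Finset.sum_eq_single b]
        · simp
        · intro j _ hjb
          have h' : ¬ (b = j) := fun h => hjb h.symm
          rw [if_neg h', mul_zero]
        · intro h; exact absurd (Finset.mem_univ b) h
      · intro i _ hia
        refine Finset.sum_eq_zero (fun j _ => ?_)
        have h' : ¬ (a = i) := fun h => hia h.symm
        rw [if_neg h', mul_zero, zero_mul]
      · intro h; exact absurd (Finset.mem_univ a) h
    have hS3 : ∑ i : Fin n, ∑ j : Fin n,
        cP A D (i,j) * alP A D (i,j) * (if a = j then (1:ℝ) else 0) * (if b = i then 1 else 0)
        = cP A D (b,a) * alP A D (b,a) := by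
      rw [Finset.sum_eq_single b]
      · rw [Finset.sum_eq_single a]
        · simp
        · intro j _ hja
          have h' : ¬ (a = j) := fun h => hja h.symm
          rw [if_neg h', mul_zero, zero_mul]
        · intro h; exact absurd (Finset.mem_univ a) h
      · intro i _ hib
        refine Finset.sum_eq_zero (fun j _ => ?_)
        have h' : ¬ (b = i) := fun h => hib h.symm
        rw [if_neg h', mul_zero]
      · intro h; exact absurd (Finset.mem_univ b) h
    have hS4 : ∑ i : Fin n, ∑ j : Fin n,
        cP A D (i,j) * alP A D (i,j)^2 * (if a = j then (1:ℝ) else 0) * (if b = j then 1 else 0)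
        = (if b = a then (1:ℝ) else 0) * ∑ i, cP A D (i,a) * alP A D (i,a)^2 := by
      rw [Finset.sum_comm]
      rw [Finset.sum_eq_single a]
      · by_cases hba : b = a
        · simp [hba, Finset.sum_mul, mul_comm]
        · simp [hba]
      · intro j _ hja
        refine Finset.sum_eq_zero (fun i _ => ?_)
        have h' : ¬ (a = j) := fun h => hja h.symm
        rw [if_neg h', mul_zero, zero_mul]
      · intro h; exact absurd (Finset.mem_univ a) h
    rw [hS1, hS2, hS3, hS4]
    -- now the case analysis
    rcases lt_trichotomy a b with hab | hab | hab
    · -- a < b : only S2 contributes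
      have hba : b ≠ a := ne_of_gt hab
      have hc3 : cP A D (b, a) = 0 := by
        rw [cP]
        dsimp only
        rw [if_neg (not_lt.mpr (le_of_lt hab)), if_neg hba]
      have h2 : cP A D (a,b) * alP A D (a,b) = A a b := by
        rw [cP, alP]
        dsimp only
        rw [if_pos hab, if_pos hab]
        exact offdiag_coeff (A a b) (D a) (D b) (ne_of_gt (hD a)) (ne_of_gt (hD b))
      rw [if_neg hba, h2, hc3, zero_mul]
      ring
    · -- a = b : diagonal
      subst hab
      rw [if_pos rfl, one_mul, one_mul]
      have hsplit : ∑ j, cP A D (a, j)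
          = cP A D (a,a) + ∑ j ∈ univ.erase a, (if a < j then |A a j| * D j / D a else 0) := by
        rw [← Finset.add_sum_erase univ _ (Finset.mem_univ a)]
        congr 1
        refine Finset.sum_congr rfl (fun j hj => ?_)
        have hja : a ≠ j := fun h => (Finset.mem_erase.mp hj).1 h.symm
        rw [cP]
        dsimp only
        by_cases h : a < j
        · rw [if_pos h, if_pos h]
        · rw [if_neg h, if_neg hja, if_neg h]
      have hS4' : ∑ i, cP A D (i,a) * alP A D (i,a)^2
          = ∑ i ∈ univ.erase a, (if i < a then |A a i| * D i / D a else 0) := by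
        rw [← Finset.add_sum_erase univ _ (Finset.mem_univ a)]
        rw [show cP A D (a,a) * alP A D (a,a)^2 = 0 by
          rw [alP]; dsimp only; rw [if_neg (lt_irrefl a)]; ring]
        rw [zero_add]
        refine Finset.sum_congr rfl (fun i hi => ?_)
        have hia : i ≠ a := (Finset.mem_erase.mp hi).1
        rw [cP, alP]
        dsimp only
        by_cases h : i < a
        · rw [if_pos h, if_pos h, if_pos h]
          rw [hAsym a i]
          exact diag_coeff (A i a) (D i) (D a) (ne_of_gt (hD i)) (ne_of_gt (hD a))
        · rw [if_neg h, if_neg hia, if_neg h]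
          rw [if_neg h]
          ring
      rw [hS4', hsplit]
      rw [show alP A D (a,a) = 0 by rw [alP]; dsimp only; rw [if_neg (lt_irrefl a)]]
      rw [show cP A D (a,a)
          = A a a - ∑ j ∈ univ.erase a, |A a j| * D j / D a by
        rw [cP]; dsimp only; rw [if_neg (lt_irrefl a), if_pos rfl]]
      have hcomb : ∑ j ∈ univ.erase a, (if a < j then |A a j| * D j / D a else 0)
          + ∑ i ∈ univ.erase a, (if i < a then |A a i| * D i / D a else 0)
          = ∑ j ∈ univ.erase a, |A a j| * D j / D a := by
        rw [← Finset.sum_add_distrib]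
        refine Finset.sum_congr rfl (fun j hj => ?_)
        have hja : j ≠ a := (Finset.mem_erase.mp hj).1
        rcases lt_or_gt_of_ne hja with h | h
        · rw [if_neg (not_lt.mpr (le_of_lt h)), if_pos h, zero_add]
        · rw [if_pos h, if_neg (not_lt.mpr (le_of_lt h)), add_zero]
      linarith [hcomb]
    · -- b < a : only S3 contributes
      have hba : b ≠ a := ne_of_lt hab
      have hc2 : cP A D (a, b) = 0 := by
        rw [cP]
        dsimp only
        rw [if_neg (not_lt.mpr (le_of_lt hab)), if_neg (Ne.symm hba)]
      have h3 : cP A D (b,a) * alP A D (b,a) = A a b := by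
        rw [cP, alP]
        dsimp only
        rw [if_pos hab, if_pos hab]
        rw [offdiag_coeff (A b a) (D b) (D a) (ne_of_gt (hD b)) (ne_of_gt (hD a))]
        exact (hAsym a b).symm
      rw [if_neg hba, h3, hc2, zero_mul]
      ring

/-- `cone(⋃_{α ∈ ℝ} B̄(α)) = SDD_n`. -/
theorem stmt13 (n : ℕ) (hn : 0 < n) :
    coneHull (⋃ α : ℝ, BbarSet n α) = SDD n :=
  Set.Subset.antisymm cone_subset_SDD SDD_subset_cone
end
end
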